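/- Let f: L¹ → (−∞, ∞] be dilatation monotone, ‖·‖₁ lower semicontinuous, with lim_{|s|→∞}(f(s·1) + s) = ∞. Then the cash-additive hull ρ^f(X) = inf_{s∈ℝ}{f(X − s) − s} is ‖·‖₁ lower semicontinuous on L¹ and never takes the value −∞. -/

import Mathlib

open MeasureTheory Filter Topology

variable {Ω : Type*} [MeasurableSpace Ω]

/-- A finite measurable partition of `Ω` whose members have positive measure. -/
structure FinPartition (μ : Measure Ω) where
  parts : Finset (Set Ω)
  measSet : ∀ A ∈ parts, MeasurableSet A
  pairwiseDisj : ∀ A ∈ parts, ∀ B ∈ parts, A ≠ B → Disjoint A B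
  cover : ⋃ A ∈ parts, A = Set.univ
  pos : ∀ A ∈ parts, 0 < μ A

/-- Conditional expectation of `X` with respect to the finite partition `π`:
`E[X|π] = ∑_{A ∈ π} (∫_A X dμ / μ(A)) 1_A`. -/
noncomputable def pCondExp (μ : Measure Ω) (π : FinPartition μ) (X : Ω → ℝ) : Ω → ℝ :=
  fun ω => ∑ A ∈ π.parts, Set.indicator A (fun _ => (∫ x in A, X x ∂μ) / (μ A).toReal) ω

/-- A simple random variable. -/
def IsSimpleRV (X : Ω → ℝ) : Prop := Measurable X ∧ (Set.range X).Finite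

/-- Membership in the smallest ideal of `L¹` generated by `S`. -/
def MemIdeal (μ : Measure Ω) (S : Set (Ω → ℝ)) (X : Ω → ℝ) : Prop :=
  ∃ (n : ℕ) (Y : Fin n → Ω → ℝ) (l : Fin n → ℝ),
    (∀ i, Y i ∈ S) ∧ (∀ i, 0 ≤ l i) ∧ ∀ᵐ ω ∂μ, |X ω| ≤ ∑ i, l i * |Y i ω|

/-- Dilatation monotonicity of `ρ` on `𝓧`. -/
def DilMono (μ : Measure Ω) (𝓧 : Set (Ω → ℝ)) (ρ : (Ω → ℝ) → EReal) : Prop :=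
  ∀ X ∈ 𝓧, ∀ π : FinPartition μ, ρ (pCondExp μ π X) ≤ ρ X

/-- The Fatou property of `ρ` on `𝓧`. -/
def FatouProp (μ : Measure Ω) (𝓧 : Set (Ω → ℝ)) (ρ : (Ω → ℝ) → EReal) : Prop :=
  ∀ (Xn : ℕ → Ω → ℝ) (X : Ω → ℝ), (∀ n, Xn n ∈ 𝓧) → X ∈ 𝓧 →
    (∀ᵐ ω ∂μ, Tendsto (fun n => Xn n ω) atTop (nhds (X ω))) →
    (∃ Y, MemIdeal μ 𝓧 Y ∧ ∀ᵐ ω ∂μ, ∀ n, |Xn n ω| ≤ Y ω) →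
    ρ X ≤ liminf (fun n => ρ (Xn n)) atTop

/-- Convergence of a net in the `σ(L¹, 𝓛)` topology. -/
def TendstoWeakSimple (μ : Measure Ω) {ι : Type*} (l : Filter ι)
    (Xn : ι → Ω → ℝ) (X : Ω → ℝ) : Prop :=
  ∀ Z : Ω → ℝ, IsSimpleRV Z →
    Tendsto (fun i => ∫ ω, Xn i ω * Z ω ∂μ) l (nhds (∫ ω, X ω * Z ω ∂μ))

/-- The extension `ρ̄(X) = sup_{π ∈ Π} ρ(E[X|π])`. -/
noncomputable def rhoBar (μ : Measure Ω) (ρ : (Ω → ℝ) → EReal) (X : Ω → ℝ) : EReal :=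
  ⨆ π : FinPartition μ, ρ (pCondExp μ π X)

/-- The conjugate `ρ^#(Y) = sup_{X ∈ 𝓛} { E[XY] - ρ(X) }`. -/
noncomputable def sharp (μ : Measure Ω) (ρ : (Ω → ℝ) → EReal) (Y : Ω → ℝ) : EReal :=
  ⨆ X : {X : Ω → ℝ // IsSimpleRV X}, (((∫ ω, X.1 ω * Y ω ∂μ : ℝ) : EReal) - ρ X.1)

/-- The trivial partition `{univ}`. -/
noncomputable def trivPart (μ : Measure Ω) [IsProbabilityMeasure μ] : FinPartition μ where
  parts := {Set.univ}
  measSet := by intro A hA; simp only [Finset.mem_singleton] at hA; subst hA; exact MeasurableSet.univ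
  pairwiseDisj := by
    intro A hA B hB hne
    simp only [Finset.mem_singleton] at hA hB
    subst hA; subst hB; exact absurd rfl hne
  cover := by simp
  pos := by
    intro A hA; simp only [Finset.mem_singleton] at hA; subst hA; simp

lemma pCondExp_triv (μ : Measure Ω) [IsProbabilityMeasure μ] (Z : Ω → ℝ) :
    pCondExp μ (trivPart μ) Z = fun _ => ∫ ω, Z ω ∂μ := by
  funext ω
  simp [pCondExp, trivPart, Set.indicator_univ, Measure.restrict_univ, measure_univ]

lemma ereal_sub_coe_add_coe (x : EReal) (r : ℝ) : x - (r : EReal) + (r : EReal) = x := by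
  rw [sub_eq_add_neg, add_assoc, ← EReal.coe_neg, ← EReal.coe_add, neg_add_cancel]
  simp

lemma ereal_coe_tendsto_bot (N : ℝ) (ψ : ℕ → ℕ) (hψ : StrictMono ψ) :
    Tendsto (fun j => ((N - ψ j : ℝ) : EReal)) atTop (𝓝 ⊥) := by
  rw [EReal.tendsto_nhds_bot_iff_real]
  intro r
  filter_upwards [eventually_gt_atTop (Nat.ceil (N - r))] with j hj
  have h1 : (N - r : ℝ) ≤ (Nat.ceil (N - r) : ℕ) := Nat.le_ceil _
  have h2 : ((Nat.ceil (N - r) : ℕ) : ℝ) < ψ j := by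
    have := hj.trans_le (hψ.le_apply)
    exact_mod_cast this
  have : (N - ψ j : ℝ) < r := by linarith
  exact_mod_cast this

/-- If `f : L¹ → (-∞,∞]` is dilatation monotone, `‖·‖₁` lower
semicontinuous and coercive, then the cash-additive hull
`ρ^f(X) = inf_s {f(X - s) - s}` is `‖·‖₁` lower semicontinuous on `L¹` and never `-∞`. -/
theorem stmt13 (μ : Measure Ω) [IsProbabilityMeasure μ]
    (f : (Ω → ℝ) → EReal) (hbot : ∀ X : Ω → ℝ, f X ≠ ⊥)
    (hdil : ∀ X : Ω → ℝ, Integrable X μ → ∀ π : FinPartition μ,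
      f (pCondExp μ π X) ≤ f X)
    (hlsc : ∀ (Xn : ℕ → Ω → ℝ) (X : Ω → ℝ), (∀ n, Integrable (Xn n) μ) →
      Integrable X μ →
      Tendsto (fun n => ∫ ω, |Xn n ω - X ω| ∂μ) atTop (nhds 0) →
      f X ≤ liminf (fun n => f (Xn n)) atTop)
    (hcoercive : ∀ M : ℝ, ∃ N : ℝ, ∀ s : ℝ, N ≤ |s| →
      (M : EReal) ≤ f (fun _ => s) + (s : EReal)) :
    (∀ (Xn : ℕ → Ω → ℝ) (X : Ω → ℝ), (∀ n, Integrable (Xn n) μ) → Integrable X μ →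
      Tendsto (fun n => ∫ ω, |Xn n ω - X ω| ∂μ) atTop (nhds 0) →
      (⨅ t : ℝ, f (fun ω => X ω - t) - (t : EReal)) ≤
        liminf (fun n => ⨅ t : ℝ, f (fun ω => Xn n ω - t) - (t : EReal)) atTop) ∧
    (∀ X : Ω → ℝ, Integrable X μ →
      (⨅ t : ℝ, f (fun ω => X ω - t) - (t : EReal)) ≠ ⊥) := by
  -- Dilatation monotonicity specialized to the trivial partition.
  have hdil' : ∀ Z : Ω → ℝ, Integrable Z μ →
      f (fun _ => ∫ ω, Z ω ∂μ) ≤ f Z := by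
    intro Z hZ
    have := hdil Z hZ (trivPart μ)
    rwa [pCondExp_triv] at this
  -- Sequential lower semicontinuity of `s ↦ f (const s)`.
  have glsc : ∀ (u : ℕ → ℝ) (s : ℝ), Tendsto u atTop (𝓝 s) →
      f (fun _ => s) ≤ liminf (fun n => f (fun _ : Ω => u n)) atTop := by
    intro u s hu
    refine hlsc (fun n _ => u n) (fun _ => s) (fun n => integrable_const _)
      (integrable_const _) ?_
    have h1 : ∀ n, ∫ _ω : Ω, |u n - s| ∂μ = |u n - s| := by
      intro n; simp [measure_univ]
    simp only [h1]
    have := (hu.sub_const s).abs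
    simpa using this
  -- The function `s ↦ f(const s) + s` is bounded below.
  have lemA : ∃ L : ℝ, ∀ s : ℝ, (L : EReal) ≤ f (fun _ : Ω => s) + (s : EReal) := by
    by_contra hA
    push_neg at hA
    choose s hs using fun n : ℕ => hA (-(n : ℝ))
    obtain ⟨N, hN⟩ := hcoercive 0
    have habs : ∀ n, |s n| < N := by
      intro n
      by_contra hc
      push_neg at hc
      have h0 : ((0 : ℝ) : EReal) < ((-(n : ℝ)) : EReal) :=
        lt_of_le_of_lt (hN (s n) hc) (hs n)
      have h0' : (0 : ℝ) < -(n : ℝ) := by exact_mod_cast h0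
      have := n.cast_nonneg (α := ℝ)
      linarith
    have hmem : ∀ n, s n ∈ Set.Icc (-N) N := by
      intro n
      exact Set.mem_Icc.mpr (abs_le.mp (habs n).le)
    obtain ⟨a, -, ψ, hψmono, hψtend⟩ :=
      tendsto_subseq_of_bounded (Metric.isBounded_Icc (-N) N) hmem
    have hub : ∀ n, f (fun _ : Ω => s n) ≤ ((N - n : ℝ) : EReal) := by
      intro n
      have h1 : f (fun _ : Ω => s n) + (s n : EReal) + ((-(s n) : ℝ) : EReal) <
          ((-(n : ℝ)) : EReal) + ((-(s n) : ℝ) : EReal) :=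
        EReal.add_lt_add_right_coe (hs n) _
      rw [add_assoc, ← EReal.coe_add, add_neg_cancel, EReal.coe_zero, add_zero] at h1
      refine le_trans h1.le ?_
      rw [← EReal.coe_neg, ← EReal.coe_add]
      refine EReal.coe_le_coe_iff.mpr ?_
      have h2 := neg_le_abs (s n)
      have h3 := (habs n).le
      linarith
    have hliminf : liminf (fun j => f (fun _ : Ω => s (ψ j))) atTop = ⊥ := by
      refine le_bot_iff.mp ?_
      calc liminf (fun j => f (fun _ : Ω => s (ψ j))) atTop
          ≤ liminf (fun j => ((N - ψ j : ℝ) : EReal)) atTop :=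
            liminf_le_liminf (Eventually.of_forall fun j => hub (ψ j))
        _ = ⊥ := (ereal_coe_tendsto_bot N ψ hψmono).liminf_eq
    have := glsc (fun j => s (ψ j)) a hψtend
    rw [hliminf] at this
    exact hbot _ (le_bot_iff.mp this)
  obtain ⟨L, hL⟩ := lemA
  -- Key lower bound: for integrable `X` and all `t`,
  -- `L - E[X] ≤ f(X - t) - t`.
  have key : ∀ (X : Ω → ℝ), Integrable X μ → ∀ t : ℝ,
      ((L - ∫ ω, X ω ∂μ : ℝ) : EReal) ≤ f (fun ω => X ω - t) - (t : EReal) := by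
    intro X hX t
    set m := ∫ ω, X ω ∂μ with hm
    have hint : Integrable (fun ω => X ω - t) μ := hX.sub (integrable_const t)
    have h1 : f (fun _ : Ω => m - t) ≤ f (fun ω => X ω - t) := by
      have := hdil' _ hint
      have hval : ∫ ω, (X ω - t) ∂μ = m - t := by
        rw [integral_sub hX (integrable_const t), integral_const]
        simp [measure_univ, hm]
      rwa [hval] at this
    have h2 : (L : EReal) ≤ f (fun _ : Ω => m - t) + ((m - t : ℝ) : EReal) := hL (m - t)
    have h3 := add_le_add_left h2 (((-m : ℝ)) : EReal)
    rw [← EReal.coe_add, add_assoc, ← EReal.coe_add,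
      show L + -m = L - m from by ring, show (m - t) + -m = -t from by ring] at h3
    calc ((L - m : ℝ) : EReal) ≤ f (fun _ : Ω => m - t) + ((-t : ℝ) : EReal) := h3
      _ ≤ f (fun ω => X ω - t) + ((-t : ℝ) : EReal) := add_le_add_left h1 _
      _ = f (fun ω => X ω - t) - (t : EReal) := by
          rw [EReal.coe_neg, ← sub_eq_add_neg]
  constructor
  · -- lower semicontinuity of the cash-additive hull
    intro Xn X hXn hX hconv
    by_contra hcon
    push_neg at hcon
    obtain ⟨c, hc1, hc2⟩ := EReal.exists_between_coe_real hcon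
    -- expectations converge
    have hE : Tendsto (fun n => ∫ ω, Xn n ω ∂μ) atTop (𝓝 (∫ ω, X ω ∂μ)) := by
      rw [tendsto_iff_dist_tendsto_zero]
      refine squeeze_zero (fun n => dist_nonneg) (fun n => ?_) hconv
      rw [Real.dist_eq]
      calc |(∫ ω, Xn n ω ∂μ) - ∫ ω, X ω ∂μ| = |∫ ω, (Xn n ω - X ω) ∂μ| := by
            rw [integral_sub (hXn n) hX]
        _ ≤ ∫ ω, |Xn n ω - X ω| ∂μ := by
            simpa [Real.norm_eq_abs] using
              norm_integral_le_integral_norm (μ := μ) (fun ω => Xn n ω - X ω)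
    set C : ℝ := |∫ ω, X ω ∂μ| + 1 with hC
    have hev : ∀ᶠ n in atTop, |∫ ω, Xn n ω ∂μ| ≤ C := by
      obtain ⟨n₀, hn₀⟩ := Metric.tendsto_atTop.mp hE 1 one_pos
      filter_upwards [eventually_ge_atTop n₀] with n hn
      have h1 := hn₀ n hn
      rw [Real.dist_eq] at h1
      have h2 := abs_sub_abs_le_abs_sub (∫ ω, Xn n ω ∂μ) (∫ ω, X ω ∂μ)
      simp only [hC]
      linarith
    have hfreq : ∃ᶠ n in atTop,
        ((⨅ t : ℝ, f (fun ω => Xn n ω - t) - (t : EReal)) < (c : EReal) ∧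
          |∫ ω, Xn n ω ∂μ| ≤ C) :=
      (frequently_lt_of_liminf_lt (by isBoundedDefault) hc1).and_eventually hev
    obtain ⟨φ, hφmono, hφ⟩ := extraction_of_frequently_atTop hfreq
    have hts : ∀ k, ∃ t : ℝ, f (fun ω => Xn (φ k) ω - t) - (t : EReal) < (c : EReal) :=
      fun k => iInf_lt_iff.mp (hφ k).1
    choose t ht using hts
    have hEb : ∀ k, |∫ ω, Xn (φ k) ω ∂μ| ≤ C := fun k => (hφ k).2
    have hflt : ∀ k, f (fun ω => Xn (φ k) ω - t k) < ((c + t k : ℝ) : EReal) := by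
      intro k
      have h1 := EReal.add_lt_add_right_coe (ht k) (t k)
      rwa [ereal_sub_coe_add_coe, ← EReal.coe_add] at h1
    obtain ⟨N, hN⟩ := hcoercive (c + C)
    set m : ℕ → ℝ := fun k => ∫ ω, Xn (φ k) ω ∂μ with hmdef
    set sK : ℕ → ℝ := fun k => m k - t k with hsKdef
    have hmk : ∀ k, ∫ ω, (Xn (φ k) ω - t k) ∂μ = sK k := by
      intro k
      rw [integral_sub (hXn (φ k)) (integrable_const (t k)), integral_const]
      simp [measure_univ, hsKdef, hmdef]
    have hsb : ∀ k, |sK k| < N := by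
      intro k
      by_contra hcn
      push_neg at hcn
      have h0 := hN (sK k) hcn
      have hg : f (fun _ : Ω => sK k) ≤ f (fun ω => Xn (φ k) ω - t k) := by
        have := hdil' (fun ω => Xn (φ k) ω - t k) ((hXn (φ k)).sub (integrable_const (t k)))
        rwa [hmk k] at this
      have hlt2 : f (fun _ : Ω => sK k) + ((sK k : ℝ) : EReal) < ((c + C : ℝ) : EReal) := by
        calc f (fun _ : Ω => sK k) + ((sK k : ℝ) : EReal)
            ≤ f (fun ω => Xn (φ k) ω - t k) + ((sK k : ℝ) : EReal) :=
              add_le_add_left hg _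
          _ < ((c + t k : ℝ) : EReal) + ((sK k : ℝ) : EReal) :=
              EReal.add_lt_add_right_coe (hflt k) _
          _ = ((c + t k + sK k : ℝ) : EReal) := by rw [← EReal.coe_add]
          _ ≤ ((c + C : ℝ) : EReal) := by
              refine EReal.coe_le_coe_iff.mpr ?_
              have h3 : t k + sK k = m k := by simp only [hsKdef]; ring
              have h4 : |m k| ≤ C := hEb k
              have h5 := le_abs_self (m k)
              linarith
      exact absurd (lt_of_le_of_lt h0 hlt2) (lt_irrefl _)
    have htb : ∀ k, t k ∈ Set.Icc (-(C + N)) (C + N) := by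
      intro k
      have h1 := hEb k
      have h2 := (hsb k).le
      have h3 : t k = m k - sK k := by simp only [hsKdef]; ring
      have h4 : |t k| ≤ C + N := by
        rw [h3]
        calc |m k - sK k| ≤ |m k| + |sK k| := abs_sub _ _
          _ ≤ C + N := add_le_add h1 h2
      exact Set.mem_Icc.mpr (abs_le.mp h4)
    obtain ⟨a, -, ψ, hψmono, hψtend⟩ :=
      tendsto_subseq_of_bounded (Metric.isBounded_Icc (-(C + N)) (C + N)) htb
    -- L¹ convergence of the shifted subsequence
    have hint1 : ∀ j, Integrable (fun ω => Xn (φ (ψ j)) ω - t (ψ j)) μ :=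
      fun j => (hXn _).sub (integrable_const _)
    have hXa : Integrable (fun ω => X ω - a) μ := hX.sub (integrable_const a)
    have hconv2 : Tendsto
        (fun j => ∫ ω, |(Xn (φ (ψ j)) ω - t (ψ j)) - (X ω - a)| ∂μ) atTop (𝓝 0) := by
      have hle : ∀ j, ∫ ω, |(Xn (φ (ψ j)) ω - t (ψ j)) - (X ω - a)| ∂μ ≤
          (∫ ω, |Xn (φ (ψ j)) ω - X ω| ∂μ) + |t (ψ j) - a| := by
        intro j
        have hmono : ∀ ω, |(Xn (φ (ψ j)) ω - t (ψ j)) - (X ω - a)| ≤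
            |Xn (φ (ψ j)) ω - X ω| + |t (ψ j) - a| := by
          intro ω
          have : (Xn (φ (ψ j)) ω - t (ψ j)) - (X ω - a) =
              (Xn (φ (ψ j)) ω - X ω) - (t (ψ j) - a) := by ring
          rw [this]
          exact abs_sub _ _
        calc ∫ ω, |(Xn (φ (ψ j)) ω - t (ψ j)) - (X ω - a)| ∂μ
            ≤ ∫ ω, (|Xn (φ (ψ j)) ω - X ω| + |t (ψ j) - a|) ∂μ := by
              refine integral_mono ((hint1 j).sub hXa).abs
                (((hXn _).sub hX).abs.add (integrable_const _)) hmono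
          _ = (∫ ω, |Xn (φ (ψ j)) ω - X ω| ∂μ) + |t (ψ j) - a| := by
              have hi1 : Integrable (fun ω => |Xn (φ (ψ j)) ω - X ω|) μ :=
                ((hXn _).sub hX).abs
              rw [integral_add hi1 (integrable_const _), integral_const]
              simp [measure_univ]
      refine squeeze_zero (fun j => integral_nonneg fun ω => abs_nonneg _) hle ?_
      have h1 : Tendsto (fun j => ∫ ω, |Xn (φ (ψ j)) ω - X ω| ∂μ) atTop (𝓝 0) :=
        hconv.comp (hφmono.comp hψmono).tendsto_atTop
      have h2 : Tendsto (fun j => |t (ψ j) - a|) atTop (𝓝 0) := by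
        have := (hψtend.sub_const a).abs
        simpa using this
      simpa using h1.add h2
    have hmain := hlsc _ _ hint1 hXa hconv2
    have hlim2 : liminf (fun j => f (fun ω => Xn (φ (ψ j)) ω - t (ψ j))) atTop ≤
        ((c + a : ℝ) : EReal) := by
      have hle2 : liminf (fun j => f (fun ω => Xn (φ (ψ j)) ω - t (ψ j))) atTop ≤
          liminf (fun j => ((c + t (ψ j) : ℝ) : EReal)) atTop :=
        liminf_le_liminf (Eventually.of_forall fun j => (hflt (ψ j)).le)
      have ht2 : Tendsto (fun j => ((c + t (ψ j) : ℝ) : EReal)) atTop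
          (𝓝 ((c + a : ℝ) : EReal)) :=
        EReal.tendsto_coe.mpr (tendsto_const_nhds.add hψtend)
      calc liminf (fun j => f (fun ω => Xn (φ (ψ j)) ω - t (ψ j))) atTop
          ≤ liminf (fun j => ((c + t (ψ j) : ℝ) : EReal)) atTop := hle2
        _ = ((c + a : ℝ) : EReal) := ht2.liminf_eq
    have hfin : f (fun ω => X ω - a) ≤ ((c + a : ℝ) : EReal) := le_trans hmain hlim2
    have hfinal : (⨅ t : ℝ, f (fun ω => X ω - t) - (t : EReal)) ≤ (c : EReal) := by
      refine le_trans (iInf_le _ a) ?_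
      calc f (fun ω => X ω - a) - (a : EReal)
          ≤ ((c + a : ℝ) : EReal) - (a : EReal) := by
            rw [sub_eq_add_neg, sub_eq_add_neg]
            exact add_le_add_left hfin _
        _ = (c : EReal) := by
            rw [← EReal.coe_sub]
            norm_num
    exact absurd hc2 (not_lt.mpr hfinal)
  · -- the hull is never `⊥`
    intro X hX
    intro hb
    have h1 : ((L - ∫ ω, X ω ∂μ : ℝ) : EReal) ≤
        ⨅ t : ℝ, f (fun ω => X ω - t) - (t : EReal) := le_iInf (key X hX)
    rw [hb] at h1
    exact EReal.coe_ne_bot _ (le_bot_iff.mp h1)
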